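/- For n ∈ ℕ, the multiple integral over the positive orthant of the squared Vandermonde against the Laguerre weight evaluates as ∫_{(0,∞)^n} (∏_i λ_i^γ) ∏_{i<j} (λ_i − λ_j)² e^{−∑_i λ_i} dλ = ∏_{j=1}^n j! · Γ(γ + j), for γ > −1. -/

import Mathlib

open Polynomial Finset Matrix

noncomputable def pe (m : ℕ) (x : ℝ) : ℝ := (ascPochhammer ℝ m).eval x

lemma pe_zero (x : ℝ) : pe 0 x = 1 := by simp [pe]

lemma pe_succ (m : ℕ) (x : ℝ) : pe (m+1) x = pe m x * (x + m) := by
  simp [pe, ascPochhammer_succ_right]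

lemma pe_succ_left (m : ℕ) (x : ℝ) : pe (m+1) x = x * pe m (x+1) := by
  simp [pe, ascPochhammer_succ_left]

lemma pe_mul (k m : ℕ) (x : ℝ) : pe (k + m) x = pe k x * pe m (x + k) := by
  have := congrArg (Polynomial.eval x) (ascPochhammer_mul (S := ℝ) k m)
  simpa [pe, Polynomial.eval_comp] using this.symm

lemma key (i : ℕ) : ∀ (a : ℝ) (j : ℕ),
    pe j (a + i) = ∑ k ∈ range (j+1),
      (j.choose k : ℝ) * (i.descFactorial k : ℝ) * pe (j - k) (a + k) := by
  induction i with
  | zero =>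
    intro a j
    rw [Finset.sum_eq_single 0]
    · simp
    · intro k hk hk0
      obtain ⟨k, rfl⟩ := Nat.exists_eq_succ_of_ne_zero hk0
      simp [Nat.zero_descFactorial_succ]
    · simp
  | succ i ih =>
    intro a j
    have hdesc : ∀ k, (((i+1)).descFactorial k : ℝ)
        = (i.descFactorial k : ℝ) + k * (i.descFactorial (k-1) : ℝ) := by
      intro k
      cases k with
      | zero => simp
      | succ k =>
        rw [Nat.add_sub_cancel, Nat.succ_descFactorial_succ, Nat.descFactorial_succ]
        rcases le_or_gt k i with h | h
        · push_cast [Nat.cast_sub h]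
          ring
        · have h0 : i.descFactorial k = 0 := Nat.descFactorial_eq_zero_iff_lt.2 h
          simp [h0]
    simp only [hdesc]
    have split : ∑ k ∈ range (j+1),
        (j.choose k : ℝ) * ((i.descFactorial k : ℝ) + k * (i.descFactorial (k-1) : ℝ)) * pe (j - k) (a + k)
        = (∑ k ∈ range (j+1), (j.choose k : ℝ) * (i.descFactorial k : ℝ) * pe (j - k) (a + k))
          + ∑ k ∈ range (j+1), (j.choose k : ℝ) * (k * (i.descFactorial (k-1) : ℝ)) * pe (j - k) (a + k) := by
      rw [← Finset.sum_add_distrib]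
      apply Finset.sum_congr rfl
      intro k _; ring
    rw [split, ← ih a j]
    cases j with
    | zero =>
      simp [pe_zero]
    | succ j =>
      have second : (∑ k ∈ range (j+1+1), ((j+1).choose k : ℝ) * (k * (i.descFactorial (k-1) : ℝ)) * pe (j+1 - k) (a + k))
          = ((j:ℝ)+1) * ∑ k ∈ range (j+1), (j.choose k : ℝ) * (i.descFactorial k : ℝ) * pe (j - k) ((a+1) + k) := by
        rw [Finset.sum_range_succ', Finset.mul_sum]
        simp only [Nat.cast_zero, zero_mul, mul_zero, add_zero, Nat.zero_sub, Nat.sub_zero]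
        apply Finset.sum_congr rfl
        intro k _
        have hc : ((j+1).choose (k+1) : ℝ) * ((k:ℝ)+1) = ((j:ℝ)+1) * (j.choose k : ℝ) := by
          have h2 : (j+1).choose (k+1) * (k+1) = (j+1) * j.choose k :=
            (Nat.add_one_mul_choose_eq j k).symm
          exact_mod_cast congrArg (Nat.cast : ℕ → ℝ) h2
        have hsub : j + 1 - (k+1) = j - k := by omega
        rw [hsub]
        push_cast
        rw [show a + ((k:ℝ)+1) = a + 1 + (k:ℝ) by ring]
        linear_combination ((i.descFactorial k : ℝ) * pe (j-k) (a+1+(k:ℝ))) * hc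
      rw [second, ← ih (a+1) j]
      push_cast
      rw [show a + ((i:ℝ)+1) = (a + (i:ℝ)) + 1 by ring,
          show a + 1 + (i:ℝ) = (a + (i:ℝ)) + 1 by ring]
      set b := a + (i:ℝ) with hb
      rw [pe_succ j (b+1), pe_succ_left j b]
      ring

lemma entry_eq (a : ℝ) {n : ℕ} (i j : ℕ) (hj : j < n) :
    pe (i + j) a
      = ∑ k ∈ range n, ((i.choose k : ℝ) * pe (i - k) (a + k))
          * ((k.factorial : ℝ) * pe k a)
          * ((j.choose k : ℝ) * pe (j - k) (a + k)) := by
  have hA : ∀ k : ℕ, ((i.choose k : ℝ) * pe (i - k) (a + k)) * ((k.factorial : ℝ) * pe k a)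
        * ((j.choose k : ℝ) * pe (j - k) (a + k))
      = (j.choose k : ℝ) * (i.descFactorial k : ℝ) * pe (j - k) (a + k) * pe i a := by
    intro k
    rcases le_or_gt k i with h | h
    · have h1 : (i.descFactorial k : ℝ) = (k.factorial : ℝ) * (i.choose k : ℝ) := by
        exact_mod_cast congrArg (Nat.cast : ℕ → ℝ) (Nat.descFactorial_eq_factorial_mul_choose i k)
      have h2 : pe i a = pe k a * pe (i - k) (a + k) := by
        have h3 := pe_mul k (i - k) a
        rw [Nat.add_sub_cancel' h] at h3
        exact h3
      rw [h1, h2]; ring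
    · have h1 : i.choose k = 0 := Nat.choose_eq_zero_of_lt h
      have h2 : i.descFactorial k = 0 := Nat.descFactorial_eq_zero_iff_lt.2 h
      simp [h1, h2]
  rw [Finset.sum_congr rfl (fun k _ => hA k)]
  rw [← Finset.sum_subset (Finset.range_subset_range.2 hj)
    (fun k _ hk => by
      have : j < k := by simpa using hk
      simp [Nat.choose_eq_zero_of_lt this])]
  rw [← Finset.sum_mul, ← key i a j, pe_mul i j a]
  ring

lemma hankel_det (a : ℝ) (n : ℕ) :
    Matrix.det (Matrix.of fun i j : Fin n => pe (i.1 + j.1) a)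
      = ∏ k ∈ range n, (k.factorial : ℝ) * pe k a := by
  classical
  set L : Matrix (Fin n) (Fin n) ℝ :=
    Matrix.of (fun i k : Fin n => ((i.1.choose k.1 : ℕ) : ℝ) * pe (i.1 - k.1) (a + k.1)) with hL
  set D : Fin n → ℝ := fun k => (k.1.factorial : ℝ) * pe k.1 a with hD
  have hfact : (Matrix.of fun i j : Fin n => pe (i.1 + j.1) a) = L * Matrix.diagonal D * Lᵀ := by
    ext i j
    rw [Matrix.mul_apply]
    simp only [Matrix.mul_diagonal, Matrix.transpose_apply, Matrix.of_apply, hL, hD]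
    rw [entry_eq a i.1 j.1 j.2, ← Fin.sum_univ_eq_sum_range]
  rw [hfact, Matrix.det_mul, Matrix.det_mul, Matrix.det_transpose]
  have hLtri : L.BlockTriangular OrderDual.toDual := by
    intro i j hij
    have : i.1 < j.1 := hij
    simp [hL, Nat.choose_eq_zero_of_lt this]
  have hdetL : L.det = 1 := by
    rw [Matrix.det_of_lowerTriangular L hLtri]
    apply Finset.prod_eq_one
    intro i _
    simp [hL, pe_zero]
  rw [hdetL, Matrix.det_diagonal, one_mul, mul_one, ← Fin.prod_univ_eq_prod_range]

lemma gamma_pe {a : ℝ} (ha : 0 < a) (m : ℕ) :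
    Real.Gamma (a + m) = pe m a * Real.Gamma a := by
  induction m with
  | zero => simp [pe_zero]
  | succ m ih =>
    have h0 : a + (m : ℝ) ≠ 0 := by positivity
    rw [show a + ((m : ℕ) + 1 : ℕ) = (a + m) + 1 by push_cast; ring,
      Real.Gamma_add_one h0, ih, pe_succ]
    ring

open MeasureTheory Equiv

noncomputable def csgn {n : ℕ} (σ : Equiv.Perm (Fin n)) : ℝ := ((Equiv.Perm.sign σ : ℤ) : ℝ)

lemma csgn_inv {n : ℕ} (σ : Equiv.Perm (Fin n)) : csgn σ⁻¹ = csgn σ := by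
  simp [csgn]

lemma csgn_mul {n : ℕ} (σ τ : Equiv.Perm (Fin n)) : csgn (σ * τ) = csgn σ * csgn τ := by
  simp [csgn]

lemma csgn_sq {n : ℕ} (σ : Equiv.Perm (Fin n)) : csgn σ * csgn σ = 1 := by
  simp [csgn, ← Int.cast_mul, Int.units_mul_self]

lemma prod_pairs {M : Type*} [CommMonoid M] {n : ℕ} (f : Fin n → Fin n → M) :
    ∏ p ∈ Finset.univ.filter (fun p : Fin n × Fin n => p.1 < p.2), f p.1 p.2
      = ∏ i, ∏ j ∈ Finset.Ioi i, f i j := by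
  rw [Finset.prod_sigma' Finset.univ (fun i => Finset.Ioi i) (fun i j => f i j)]
  apply Finset.prod_bij (fun (p : Fin n × Fin n) _ => (⟨p.1, p.2⟩ : Σ _ : Fin n, Fin n))
  · intro p hp
    simp only [Finset.mem_filter, Finset.mem_univ, true_and] at hp
    simp [Finset.mem_sigma, Finset.mem_Ioi, hp]
  · intro p1 h1 p2 h2 h
    cases p1; cases p2
    simpa [Prod.ext_iff] using h
  · intro x hx
    refine ⟨(x.1, x.2), ?_, rfl⟩
    simp only [Finset.mem_sigma, Finset.mem_Ioi] at hx
    simp [hx.2]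
  · intro p hp; rfl

lemma perm_sum (n : ℕ) (F : ℕ → ℝ) :
    (∑ p : Equiv.Perm (Fin n) × Equiv.Perm (Fin n),
      (csgn p.1 * csgn p.2) * ∏ i, F (((p.1⁻¹ i : Fin n) : ℕ) + ((p.2⁻¹ i : Fin n) : ℕ)))
    = (n.factorial : ℝ) * Matrix.det (Matrix.of fun i j : Fin n => F (i.1 + j.1)) := by
  classical
  have einv : (∑ p : Equiv.Perm (Fin n) × Equiv.Perm (Fin n),
      (csgn p.1 * csgn p.2) * ∏ i, F (((p.1⁻¹ i : Fin n) : ℕ) + ((p.2⁻¹ i : Fin n) : ℕ)))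
      = ∑ p : Equiv.Perm (Fin n) × Equiv.Perm (Fin n),
      (csgn p.1 * csgn p.2) * ∏ i, F (((p.1 i : Fin n) : ℕ) + ((p.2 i : Fin n) : ℕ)) := by
    apply Fintype.sum_equiv ((Equiv.inv (Equiv.Perm (Fin n))).prodCongr (Equiv.inv (Equiv.Perm (Fin n))))
    intro p
    simp [csgn_inv]
  rw [einv, Fintype.sum_prod_type]
  have hinner : ∀ σ : Equiv.Perm (Fin n),
      (∑ τ : Equiv.Perm (Fin n), (csgn σ * csgn τ) * ∏ i, F (((σ i : Fin n) : ℕ) + ((τ i : Fin n) : ℕ)))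
      = ∑ ρ : Equiv.Perm (Fin n), csgn ρ * ∏ i, F (i.1 + (ρ i).1) := by
    intro σ
    refine (Fintype.sum_equiv (Equiv.mulRight σ)
      (fun ρ => csgn ρ * ∏ i, F (i.1 + (ρ i).1))
      (fun τ => (csgn σ * csgn τ) * ∏ i, F (((σ i : Fin n) : ℕ) + ((τ i : Fin n) : ℕ))) ?_).symm
    intro ρ
    have h1 : csgn σ * csgn (ρ * σ) = csgn ρ := by
      rw [csgn_mul]
      calc csgn σ * (csgn ρ * csgn σ) = csgn ρ * (csgn σ * csgn σ) := by ring
        _ = csgn ρ := by rw [csgn_sq, mul_one]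
    have h2 : (∏ i, F (((σ i : Fin n) : ℕ) + (((ρ * σ) i : Fin n) : ℕ)))
        = ∏ i, F (i.1 + (ρ i).1) := by
      rw [← Equiv.prod_comp σ (fun j => F (j.1 + (ρ j).1))]
      exact Finset.prod_congr rfl fun i _ => rfl
    simp only [Equiv.coe_mulRight]
    rw [← h1, ← h2]
  rw [Finset.sum_congr rfl (fun σ _ => hinner σ)]
  rw [Finset.sum_const, Finset.card_univ, Fintype.card_perm, Fintype.card_fin, nsmul_eq_mul]
  congr 1
  rw [Matrix.det_apply']
  refine Finset.sum_congr rfl fun ρ _ => ?_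
  congr 1
  exact Finset.prod_congr rfl fun i _ => by rw [Matrix.of_apply, Nat.add_comm]

noncomputable def gfun (γ : ℝ) (m : ℕ) (x : ℝ) : ℝ := Real.exp (-x) * x ^ (γ + m)

lemma gfun_int {γ : ℝ} (hγ : -1 < γ) (m : ℕ) :
    MeasureTheory.IntegrableOn (gfun γ m) (Set.Ioi 0) := by
  have h : (0:ℝ) < γ + m + 1 := by
    have : (0:ℝ) ≤ m := Nat.cast_nonneg m
    linarith
  have h2 := Real.GammaIntegral_convergent h
  show MeasureTheory.IntegrableOn (fun x => Real.exp (-x) * x ^ (γ + (m:ℝ))) (Set.Ioi 0)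
  simpa [gfun, show γ + (m:ℝ) + 1 - 1 = γ + m by ring] using h2

lemma gfun_integral {γ : ℝ} (hγ : -1 < γ) (m : ℕ) :
    ∫ x in Set.Ioi (0:ℝ), gfun γ m x = Real.Gamma (γ + m + 1) := by
  have h : (0:ℝ) < γ + m + 1 := by
    have : (0:ℝ) ≤ m := Nat.cast_nonneg m
    linarith
  rw [Real.Gamma_eq_integral h]
  simp [gfun, show γ + (m:ℝ) + 1 - 1 = γ + m by ring]

lemma pointwise (γ : ℝ) {n : ℕ} (lam : Fin n → ℝ) (hpos : ∀ i, 0 < lam i) :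
    (∏ i, lam i ^ γ) *
      (∏ p ∈ Finset.univ.filter (fun p : Fin n × Fin n => p.1 < p.2), (lam p.1 - lam p.2) ^ 2) *
      Real.exp (-(∑ i, lam i))
    = ∑ p : Equiv.Perm (Fin n) × Equiv.Perm (Fin n),
        (csgn p.1 * csgn p.2) *
          ∏ i, gfun γ (((p.1⁻¹ i : Fin n) : ℕ) + ((p.2⁻¹ i : Fin n) : ℕ)) (lam i) := by
  classical
  have hdet : Matrix.det (Matrix.vandermonde lam)
      = ∑ σ : Equiv.Perm (Fin n), csgn σ * ∏ i, lam i ^ ((σ⁻¹ i : Fin n) : ℕ) := by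
    rw [Matrix.det_apply']
    refine Finset.sum_congr rfl fun σ _ => ?_
    congr 1
    rw [← Equiv.prod_comp σ (fun j => lam j ^ ((σ⁻¹ j : Fin n) : ℕ))]
    refine Finset.prod_congr rfl fun i _ => ?_
    simp [Matrix.vandermonde_apply]
  have h1 : (∏ p ∈ Finset.univ.filter (fun p : Fin n × Fin n => p.1 < p.2),
      (lam p.1 - lam p.2) ^ 2) = (Matrix.det (Matrix.vandermonde lam)) ^ 2 := by
    rw [Matrix.det_vandermonde, ← Finset.prod_pow]
    rw [prod_pairs (fun i j : Fin n => (lam i - lam j) ^ 2)]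
    refine Finset.prod_congr rfl fun i _ => ?_
    rw [← Finset.prod_pow]
    exact Finset.prod_congr rfl fun j _ => by ring
  rw [h1, sq, hdet, Finset.sum_mul_sum, Fintype.sum_prod_type]
  rw [Finset.mul_sum, Finset.sum_mul]
  refine Finset.sum_congr rfl fun σ _ => ?_
  rw [Finset.mul_sum, Finset.sum_mul]
  refine Finset.sum_congr rfl fun τ _ => ?_
  have hexp : Real.exp (-(∑ i, lam i)) = ∏ i, Real.exp (-(lam i)) := by
    rw [← Real.exp_sum]
    congr 1
    rw [← Finset.sum_neg_distrib]
  have hg : ∀ i, gfun γ (((σ⁻¹ i : Fin n) : ℕ) + ((τ⁻¹ i : Fin n) : ℕ)) (lam i)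
      = lam i ^ γ * (lam i ^ ((σ⁻¹ i : Fin n) : ℕ) * lam i ^ ((τ⁻¹ i : Fin n) : ℕ))
        * Real.exp (-(lam i)) := by
    intro i
    have hx := hpos i
    show Real.exp (-(lam i)) * lam i ^ (γ + ((((σ⁻¹ i : Fin n) : ℕ) + ((τ⁻¹ i : Fin n) : ℕ) : ℕ) : ℝ)) = _
    rw [show (γ + ((((σ⁻¹ i : Fin n) : ℕ) + ((τ⁻¹ i : Fin n) : ℕ) : ℕ) : ℝ))
        = γ + (((σ⁻¹ i : Fin n) : ℕ) : ℝ) + (((τ⁻¹ i : Fin n) : ℕ) : ℝ) by push_cast; ring]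
    rw [Real.rpow_add hx, Real.rpow_add hx, Real.rpow_natCast, Real.rpow_natCast]
    ring
  rw [Finset.prod_congr rfl (fun i _ => hg i), hexp]
  simp only [Finset.prod_mul_distrib]
  ring

lemma indicator_prod (γ : ℝ) {n : ℕ} (e : Fin n → ℕ) :
    (Set.univ.pi (fun _ : Fin n => Set.Ioi (0:ℝ))).indicator
        (fun lam : Fin n → ℝ => ∏ i, gfun γ (e i) (lam i))
      = fun lam => ∏ i, (Set.Ioi (0:ℝ)).indicator (gfun γ (e i)) (lam i) := by
  funext lam
  by_cases h : lam ∈ Set.univ.pi (fun _ : Fin n => Set.Ioi (0:ℝ))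
  · rw [Set.indicator_of_mem h]
    exact Finset.prod_congr rfl fun i _ =>
      (Set.indicator_of_mem (h i (Set.mem_univ i)) _).symm
  · rw [Set.indicator_of_notMem h]
    obtain ⟨i, hi⟩ : ∃ i, lam i ∉ Set.Ioi (0:ℝ) := by
      by_contra hc
      push_neg at hc
      exact h (fun i _ => hc i)
    exact (Finset.prod_eq_zero (Finset.mem_univ i) (Set.indicator_of_notMem hi _)).symm

lemma term_integrable {γ : ℝ} (hγ : -1 < γ) {n : ℕ} (e : Fin n → ℕ) :
    MeasureTheory.IntegrableOn (fun lam : Fin n → ℝ => ∏ i, gfun γ (e i) (lam i))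
      (Set.univ.pi (fun _ : Fin n => Set.Ioi (0:ℝ))) := by
  have hSm : MeasurableSet (Set.univ.pi (fun _ : Fin n => Set.Ioi (0:ℝ))) :=
    MeasurableSet.univ_pi (fun _ => measurableSet_Ioi)
  rw [← MeasureTheory.integrable_indicator_iff hSm, indicator_prod]
  exact MeasureTheory.Integrable.fintype_prod
    (fun i => (MeasureTheory.integrable_indicator_iff measurableSet_Ioi).2 (gfun_int hγ (e i)))

lemma term_integral {γ : ℝ} (hγ : -1 < γ) {n : ℕ} (e : Fin n → ℕ) :
    ∫ lam : Fin n → ℝ in Set.univ.pi (fun _ : Fin n => Set.Ioi (0:ℝ)),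
        ∏ i, gfun γ (e i) (lam i)
      = ∏ i, Real.Gamma (γ + (e i) + 1) := by
  have hSm : MeasurableSet (Set.univ.pi (fun _ : Fin n => Set.Ioi (0:ℝ))) :=
    MeasurableSet.univ_pi (fun _ => measurableSet_Ioi)
  rw [← MeasureTheory.integral_indicator hSm, indicator_prod]
  rw [MeasureTheory.integral_fintype_prod_volume_eq_prod
    (fun i (x : ℝ) => (Set.Ioi (0:ℝ)).indicator (gfun γ (e i)) x)]
  refine Finset.prod_congr rfl fun i _ => ?_
  rw [MeasureTheory.integral_indicator measurableSet_Ioi, gfun_integral hγ]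

lemma prod_fact (n : ℕ) :
    ∏ j ∈ range n, ((j+1).factorial : ℝ)
      = (n.factorial : ℝ) * ∏ j ∈ range n, (j.factorial : ℝ) := by
  induction n with
  | zero => simp
  | succ n ih =>
    rw [Finset.prod_range_succ, ih, Finset.prod_range_succ]
    rw [show (n+1).factorial = (n+1) * n.factorial from rfl]
    push_cast
    ring

/-- The Laguerre Selberg/Mehta integral: for `γ > -1`,
`∫_{(0,∞)^n} (∏_i λ_i^γ) ∏_{i<j} (λ_i - λ_j)² e^{-∑_i λ_i} dλ = ∏_{j=1}^n j! Γ(γ+j)`. -/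
theorem stmt14 (γ : ℝ) (hγ : -1 < γ) (n : ℕ) :
    ∫ lam : Fin n → ℝ in Set.univ.pi (fun _ : Fin n => Set.Ioi (0 : ℝ)),
        (∏ i, lam i ^ γ) *
          (∏ p ∈ Finset.univ.filter (fun p : Fin n × Fin n => p.1 < p.2),
            (lam p.1 - lam p.2) ^ 2) *
          Real.exp (-(∑ i, lam i)) =
      ∏ j ∈ Finset.range n, (Nat.factorial (j + 1) : ℝ) * Real.Gamma (γ + (j : ℝ) + 1) := by
  classical
  have ha : (0:ℝ) < γ + 1 := by linarith
  have hSm : MeasurableSet (Set.univ.pi (fun _ : Fin n => Set.Ioi (0:ℝ))) :=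
    MeasurableSet.univ_pi (fun _ => measurableSet_Ioi)
  have hpt : Set.EqOn
      (fun lam : Fin n → ℝ =>
        (∏ i, lam i ^ γ) *
          (∏ p ∈ Finset.univ.filter (fun p : Fin n × Fin n => p.1 < p.2),
            (lam p.1 - lam p.2) ^ 2) *
          Real.exp (-(∑ i, lam i)))
      (fun lam => ∑ p : Equiv.Perm (Fin n) × Equiv.Perm (Fin n),
        (csgn p.1 * csgn p.2) *
          ∏ i, gfun γ (((p.1⁻¹ i : Fin n) : ℕ) + ((p.2⁻¹ i : Fin n) : ℕ)) (lam i))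
      (Set.univ.pi (fun _ : Fin n => Set.Ioi (0:ℝ))) :=
    fun lam hlam => pointwise γ lam (fun i => hlam i (Set.mem_univ i))
  rw [MeasureTheory.setIntegral_congr_fun hSm hpt]
  rw [MeasureTheory.integral_finset_sum _
    (fun p _ => ((term_integrable hγ
      (fun i => ((p.1⁻¹ i : Fin n) : ℕ) + ((p.2⁻¹ i : Fin n) : ℕ))).const_mul _))]
  have hterm : ∀ p : Equiv.Perm (Fin n) × Equiv.Perm (Fin n),
      (∫ lam : Fin n → ℝ in Set.univ.pi (fun _ : Fin n => Set.Ioi (0:ℝ)),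
        (csgn p.1 * csgn p.2) *
          ∏ i, gfun γ (((p.1⁻¹ i : Fin n) : ℕ) + ((p.2⁻¹ i : Fin n) : ℕ)) (lam i))
      = (csgn p.1 * csgn p.2) *
          ∏ i, Real.Gamma (γ + ((((p.1⁻¹ i : Fin n) : ℕ) + ((p.2⁻¹ i : Fin n) : ℕ) : ℕ) : ℝ) + 1) := by
    intro p
    rw [MeasureTheory.integral_const_mul _ _,
      term_integral hγ (fun i => ((p.1⁻¹ i : Fin n) : ℕ) + ((p.2⁻¹ i : Fin n) : ℕ))]
  rw [Finset.sum_congr rfl (fun p _ => hterm p)]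
  rw [perm_sum n (fun m => Real.Gamma (γ + (m : ℝ) + 1))]
  have hent : ∀ i j : Fin n,
      Real.Gamma (γ + ((i.1 + j.1 : ℕ) : ℝ) + 1)
        = Real.Gamma (γ+1) * pe (i.1 + j.1) (γ+1) := by
    intro i j
    rw [show γ + ((i.1 + j.1 : ℕ) : ℝ) + 1 = (γ+1) + ((i.1 + j.1 : ℕ) : ℝ) by ring,
      gamma_pe ha, mul_comm]
  have hdetG : Matrix.det (Matrix.of fun i j : Fin n => Real.Gamma (γ + ((i.1 + j.1 : ℕ) : ℝ) + 1))
      = Real.Gamma (γ+1) ^ n * ∏ k ∈ range n, (k.factorial : ℝ) * pe k (γ+1) := by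
    have : (Matrix.of fun i j : Fin n => Real.Gamma (γ + ((i.1 + j.1 : ℕ) : ℝ) + 1))
        = Matrix.of (fun i j : Fin n =>
            (fun _ : Fin n => Real.Gamma (γ+1)) i *
              (Matrix.of fun i j : Fin n => pe (i.1 + j.1) (γ+1)) i j) := by
      ext i j
      simp only [Matrix.of_apply]
      exact hent i j
    rw [this, Matrix.det_mul_column, hankel_det, Finset.prod_const, Finset.card_univ,
      Fintype.card_fin]
  rw [hdetG]
  have hrhs : ∀ j ∈ range n, (Nat.factorial (j + 1) : ℝ) * Real.Gamma (γ + (j : ℝ) + 1)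
      = ((j+1).factorial : ℝ) * (pe j (γ+1) * Real.Gamma (γ+1)) := by
    intro j _
    rw [show γ + (j : ℝ) + 1 = (γ+1) + (j : ℝ) by ring, gamma_pe ha]
  rw [Finset.prod_congr rfl hrhs]
  simp only [Finset.prod_mul_distrib, Finset.prod_const, Finset.card_range]
  rw [prod_fact]
  ring
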